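/- No shape expresses the TPF (?x,?y,c) as a shape fragment: for every IRI c and every shape φ, there exists an RDF graph G such that Frag(G,{φ}) ≠ {(s,q,o) ∈ G | o = c}. In particular, for a graph G = {(a,b,c),(a,b,d)} where the property b is not mentioned in φ and a,b,c,d are distinct, if (a,b,c) ∈ Frag(G,{φ}) then also (a,b,d) ∈ Frag(G,{φ}), contradicting equality with the TPF result. -/

import Mathlib

abbrev Node := ℕ
abbrev Triple := Node × Node × Node
abbrev RDFGraph := Set Triple

inductive PathExpr where
  | prop : Node → PathExpr
  | inv : PathExpr → PathExpr
  | comp : PathExpr → PathExpr → PathExpr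
  | union : PathExpr → PathExpr → PathExpr
  | star : PathExpr → PathExpr
  | opt : PathExpr → PathExpr

/-- Evaluation of a path expression on a graph, as a binary relation on nodes. -/
def evalPE : PathExpr → RDFGraph → Node → Node → Prop
  | .prop p, G, a, b => (a, p, b) ∈ G
  | .inv E, G, a, b => evalPE E G b a
  | .comp E₁ E₂, G, a, b => ∃ c, evalPE E₁ G a c ∧ evalPE E₂ G c b
  | .union E₁ E₂, G, a, b => evalPE E₁ G a b ∨ evalPE E₂ G a b
  | .star E, G, a, b => Relation.ReflTransGen (fun x y => evalPE E G x y) a b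
  | .opt E, G, a, b => a = b ∨ evalPE E G a b

/-- A step: a forward triple or a backward (reversed) triple. -/
inductive Step where
  | fwd : Triple → Step
  | bwd : Triple → Step

/-- The RDF triple underlying a step (reversing backward steps). -/
def Step.triple : Step → Triple
  | .fwd t => t
  | .bwd t => t

def Step.rev : Step → Step
  | .fwd t => .bwd t
  | .bwd t => .fwd t

/-- Reversal of a path. -/
def revPath (π : List Step) : List Step := (π.map Step.rev).reverse

/-- `IsPath E G a b π` : π is a path generated by E in G from a to b. -/
inductive IsPath : PathExpr → RDFGraph → Node → Node → List Step → Prop where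
  | prop {p : Node} {G : RDFGraph} {a b : Node} :
      (a, p, b) ∈ G → IsPath (.prop p) G a b [.fwd (a, p, b)]
  | inv {E G a b π} : IsPath E G b a π → IsPath (.inv E) G a b (revPath π)
  | comp {E₁ E₂ G a c b π₁ π₂} : IsPath E₁ G a c π₁ → IsPath E₂ G c b π₂ →
      IsPath (.comp E₁ E₂) G a b (π₁ ++ π₂)
  | unionL {E₁ E₂ G a b π} : IsPath E₁ G a b π → IsPath (.union E₁ E₂) G a b π
  | unionR {E₁ E₂ G a b π} : IsPath E₂ G a b π → IsPath (.union E₁ E₂) G a b π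
  | opt {E G a b π} : IsPath E G a b π → IsPath (.opt E) G a b π
  | starOne {E G a b π} : IsPath E G a b π → IsPath (.star E) G a b π
  | starStep {E G a c b π₁ π₂} : IsPath E G a c π₁ → IsPath (.star E) G c b π₂ →
      IsPath (.star E) G a b (π₁ ++ π₂)

/-- graph(paths(E,G,a,b)) : the subgraph traced out by all E-paths from a to b. -/
def graphOfPaths (E : PathExpr) (G : RDFGraph) (a b : Node) : RDFGraph :=
  {t | ∃ π, IsPath E G a b π ∧ ∃ st ∈ π, st.triple = t}

/-- graph(paths(E,G)) : the subgraph traced out by all E-paths in G. -/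
def graphOfAllPaths (E : PathExpr) (G : RDFGraph) : RDFGraph :=
  {t | ∃ a b, t ∈ graphOfPaths E G a b}

inductive PathOrId where
  | id : PathOrId
  | expr : PathExpr → PathOrId

inductive Shape where
  | top : Shape
  | bot : Shape
  | test : (Node → Prop) → Shape
  | hasValue : Node → Shape
  | eq : PathOrId → Node → Shape
  | disj : PathOrId → Node → Shape
  | closed : Finset Node → Shape
  | lessThan : PathExpr → Node → Shape
  | lessThanEq : PathExpr → Node → Shape
  | uniqueLang : PathExpr → Shape
  | not : Shape → Shape
  | and : Shape → Shape → Shape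
  | or : Shape → Shape → Shape
  | geq : ℕ → PathExpr → Shape → Shape
  | leq : ℕ → PathExpr → Shape → Shape
  | all : PathExpr → Shape → Shape

/-- Context: the strict partial order `<` on literals and the
language-tag equivalence `∼`. -/
structure Ctx where
  lt : Node → Node → Prop
  sim : Node → Node → Prop

/-- [[F]]_G(v) for F a path expression or `id`. -/
def evalF : PathOrId → RDFGraph → Node → Set Node
  | .id, _, v => {v}
  | .expr E, G, v => {b | evalPE E G v b}

/-- The set of p-successors of v in G. -/
def psucc (G : RDFGraph) (v p : Node) : Set Node := {b | (v, p, b) ∈ G}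

/-- Conformance of a focus node to a shape (Table 1). -/
def Conforms (C : Ctx) (G : RDFGraph) : Shape → Node → Prop
  | .top, _ => True
  | .bot, _ => False
  | .test t, v => t v
  | .hasValue c, v => v = c
  | .eq F p, v => evalF F G v = psucc G v p
  | .disj F p, v => evalF F G v ∩ psucc G v p = ∅
  | .closed P, v => ∀ q b, (v, q, b) ∈ G → q ∈ P
  | .lessThan E p, v => ∀ b c, evalPE E G v b → (v, p, c) ∈ G → C.lt b c
  | .lessThanEq E p, v => ∀ b c, evalPE E G v b → (v, p, c) ∈ G → (C.lt b c ∨ b = c)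
  | .uniqueLang E, v => ∀ b c, evalPE E G v b → evalPE E G v c → b ≠ c → ¬ C.sim b c
  | .not φ, v => ¬ Conforms C G φ v
  | .and φ ψ, v => Conforms C G φ v ∧ Conforms C G ψ v
  | .or φ ψ, v => Conforms C G φ v ∨ Conforms C G ψ v
  | .geq n E ψ, v => ∃ s : Finset Node, s.card = n ∧ ∀ b ∈ s, evalPE E G v b ∧ Conforms C G ψ b
  | .leq n E ψ, v => ∀ s : Finset Node, (∀ b ∈ s, evalPE E G v b ∧ Conforms C G ψ b) → s.card ≤ n
  | .all E ψ, v => ∀ b, evalPE E G v b → Conforms C G ψ b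

/-- Atomic shapes. -/
def Shape.Atomic : Shape → Prop
  | .not _ => False
  | .and _ _ => False
  | .or _ _ => False
  | .geq _ _ _ => False
  | .leq _ _ _ => False
  | .all _ _ => False
  | _ => True

/-- Negation normal form: negation applied only to atomic shapes. -/
def IsNNF : Shape → Prop
  | .not φ => φ.Atomic
  | .and φ ψ => IsNNF φ ∧ IsNNF ψ
  | .or φ ψ => IsNNF φ ∧ IsNNF ψ
  | .geq _ _ ψ => IsNNF ψ
  | .leq _ _ ψ => IsNNF ψ
  | .all _ ψ => IsNNF ψ
  | _ => True

mutual
/-- The φ-neighborhood B(v,G,φ) of a node (Table 2); empty when v does not conform. -/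
def B (C : Ctx) (G : RDFGraph) : Shape → Node → RDFGraph
  | .not φ, v => Bneg C G φ v
  | .and φ ψ, v => {t | Conforms C G (.and φ ψ) v ∧ (t ∈ B C G φ v ∨ t ∈ B C G ψ v)}
  | .or φ ψ, v => {t | Conforms C G (.or φ ψ) v ∧ (t ∈ B C G φ v ∨ t ∈ B C G ψ v)}
  | .geq n E ψ, v => {t | Conforms C G (.geq n E ψ) v ∧
      ∃ x, evalPE E G v x ∧ Conforms C G ψ x ∧ (t ∈ graphOfPaths E G v x ∨ t ∈ B C G ψ x)}
  | .leq n E ψ, v => {t | Conforms C G (.leq n E ψ) v ∧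
      ∃ x, evalPE E G v x ∧ ¬ Conforms C G ψ x ∧ (t ∈ graphOfPaths E G v x ∨ t ∈ Bneg C G ψ x)}
  | .all E ψ, v => {t | Conforms C G (.all E ψ) v ∧
      ∃ x, evalPE E G v x ∧ (t ∈ graphOfPaths E G v x ∨ t ∈ B C G ψ x)}
  | .eq (.expr E) p, v => {t | Conforms C G (.eq (.expr E) p) v ∧
      ∃ x, t ∈ graphOfPaths (.union E (.prop p)) G v x}
  | .eq .id p, v => {t | Conforms C G (.eq .id p) v ∧ t = (v, p, v)}
  | _, _ => ∅

/-- Neighborhood of v for the negation normal form of ¬φ (Table 2, negated cases). -/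
def Bneg (C : Ctx) (G : RDFGraph) : Shape → Node → RDFGraph
  | .not φ, v => B C G φ v
  | .and φ ψ, v => {t | ¬ Conforms C G (.and φ ψ) v ∧ (t ∈ Bneg C G φ v ∨ t ∈ Bneg C G ψ v)}
  | .or φ ψ, v => {t | ¬ Conforms C G (.or φ ψ) v ∧ (t ∈ Bneg C G φ v ∨ t ∈ Bneg C G ψ v)}
  | .geq n E ψ, v => {t | ¬ Conforms C G (.geq n E ψ) v ∧
      ∃ x, evalPE E G v x ∧ ¬ Conforms C G ψ x ∧ (t ∈ graphOfPaths E G v x ∨ t ∈ Bneg C G ψ x)}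
  | .leq n E ψ, v => {t | ¬ Conforms C G (.leq n E ψ) v ∧
      ∃ x, evalPE E G v x ∧ Conforms C G ψ x ∧ (t ∈ graphOfPaths E G v x ∨ t ∈ B C G ψ x)}
  | .all E ψ, v => {t | ¬ Conforms C G (.all E ψ) v ∧
      ∃ x, evalPE E G v x ∧ ¬ Conforms C G ψ x ∧ (t ∈ graphOfPaths E G v x ∨ t ∈ Bneg C G ψ x)}
  | .eq (.expr E) p, v => {t | ¬ Conforms C G (.eq (.expr E) p) v ∧
      ((∃ x, (v, p, x) ∉ G ∧ t ∈ graphOfPaths E G v x) ∨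
       (∃ x, t = (v, p, x) ∧ (v, p, x) ∈ G ∧ ¬ evalPE E G v x))}
  | .eq .id p, v => {t | ¬ Conforms C G (.eq .id p) v ∧
      ∃ x, t = (v, p, x) ∧ (v, p, x) ∈ G ∧ x ≠ v}
  | .disj (.expr E) p, v => {t | ¬ Conforms C G (.disj (.expr E) p) v ∧
      ∃ x, evalPE E G v x ∧ (v, p, x) ∈ G ∧ (t ∈ graphOfPaths E G v x ∨ t = (v, p, x))}
  | .disj .id p, v => {t | ¬ Conforms C G (.disj .id p) v ∧ t = (v, p, v)}
  | .lessThan E p, v => {t | ¬ Conforms C G (.lessThan E p) v ∧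
      ∃ x y, evalPE E G v x ∧ (v, p, y) ∈ G ∧ ¬ C.lt x y ∧
        (t ∈ graphOfPaths E G v x ∨ t = (v, p, y))}
  | .lessThanEq E p, v => {t | ¬ Conforms C G (.lessThanEq E p) v ∧
      ∃ x y, evalPE E G v x ∧ (v, p, y) ∈ G ∧ ¬ (C.lt x y ∨ x = y) ∧
        (t ∈ graphOfPaths E G v x ∨ t = (v, p, y))}
  | .uniqueLang E, v => {t | ¬ Conforms C G (.uniqueLang E) v ∧
      ∃ y x, evalPE E G v y ∧ evalPE E G v x ∧ x ≠ y ∧ C.sim x y ∧ t ∈ graphOfPaths E G v y}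
  | .closed P, v => {t | ¬ Conforms C G (.closed P) v ∧
      ∃ q x, t = (v, q, x) ∧ (v, q, x) ∈ G ∧ q ∉ P}
  | _, _ => ∅
end

/-- The shape fragment of G for a set S of request shapes. -/
def Frag (C : Ctx) (G : RDFGraph) (S : Set Shape) : RDFGraph :=
  {t | ∃ v φ, φ ∈ S ∧ t ∈ B C G φ v}

/-- A shape definition: name, shape expression, target expression. -/
structure ShapeDef where
  name : Node
  shape : Shape
  target : Shape

/-- G conforms to the schema H. -/
def SchemaConforms (C : Ctx) (G : RDFGraph) (H : List ShapeDef) : Prop :=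
  ∀ d ∈ H, ∀ a : Node, Conforms C G d.target a → Conforms C G d.shape a

/-- The request shapes derived from a schema: each shape conjoined with its target. -/
def schemaShapes (H : List ShapeDef) : Set Shape :=
  {φ | ∃ d ∈ H, φ = Shape.and d.shape d.target}

/-- The shape fragment of G for a schema H. -/
def FragH (C : Ctx) (G : RDFGraph) (H : List ShapeDef) : RDFGraph :=
  Frag C G (schemaShapes H)

/-- A shape is monotone if conformance is preserved under adding triples. -/
def MonotoneShape (C : Ctx) (φ : Shape) : Prop :=
  ∀ G G' : RDFGraph, G ⊆ G' → ∀ v, Conforms C G φ v → Conforms C G' φ v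

/-- Properties mentioned in a path expression. -/
def PathExpr.props : PathExpr → Set Node
  | .prop p => {p}
  | .inv E => E.props
  | .comp E₁ E₂ => E₁.props ∪ E₂.props
  | .union E₁ E₂ => E₁.props ∪ E₂.props
  | .star E => E.props
  | .opt E => E.props

def PathOrId.props : PathOrId → Set Node
  | .id => ∅
  | .expr E => E.props

/-- Properties mentioned in a shape. -/
def Shape.props : Shape → Set Node
  | .top => ∅
  | .bot => ∅
  | .test _ => ∅
  | .hasValue _ => ∅
  | .eq F p => F.props ∪ {p}
  | .disj F p => F.props ∪ {p}
  | .closed P => ↑P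
  | .lessThan E p => E.props ∪ {p}
  | .lessThanEq E p => E.props ∪ {p}
  | .uniqueLang E => E.props
  | .not φ => φ.props
  | .and φ ψ => φ.props ∪ ψ.props
  | .or φ ψ => φ.props ∪ ψ.props
  | .geq _ E ψ => E.props ∪ ψ.props
  | .leq _ E ψ => E.props ∪ ψ.props
  | .all E ψ => E.props ∪ ψ.props

/-- Every step on a path generated by E uses a property mentioned in E. -/
lemma isPath_prop_mem {E : PathExpr} {G : RDFGraph} {a b : Node} {π : List Step}
    (h : IsPath E G a b π) : ∀ st ∈ π, st.triple.2.1 ∈ E.props := by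
  induction h with
  | prop hmem =>
    intro st hst
    simp only [List.mem_singleton] at hst
    subst hst
    simp [Step.triple, PathExpr.props]
  | inv _ ih =>
    intro st hst
    simp only [revPath, List.mem_reverse, List.mem_map] at hst
    obtain ⟨st', hst', rfl⟩ := hst
    have := ih st' hst'
    cases st' <;> simpa [Step.rev, Step.triple, PathExpr.props] using this
  | comp _ _ ih₁ ih₂ =>
    intro st hst
    rcases List.mem_append.1 hst with h | h
    · exact Or.inl (ih₁ st h)
    · exact Or.inr (ih₂ st h)
  | unionL _ ih => exact fun st hst => Or.inl (ih st hst)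
  | unionR _ ih => exact fun st hst => Or.inr (ih st hst)
  | opt _ ih => exact ih
  | starOne _ ih => exact ih
  | starStep _ _ ih₁ ih₂ =>
    intro st hst
    rcases List.mem_append.1 hst with h | h
    · exact ih₁ st h
    · exact ih₂ st h

lemma graphOfPaths_prop_mem {E : PathExpr} {G : RDFGraph} {a b : Node} {t : Triple}
    (h : t ∈ graphOfPaths E G a b) : t.2.1 ∈ E.props := by
  obtain ⟨π, hπ, st, hst, rfl⟩ := h
  exact isPath_prop_mem hπ st hst

/-- Key lemma: if a triple with property not mentioned in φ lies in B (resp. Bneg),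
then every triple of G with the same subject and property does too. -/
lemma key (C : Ctx) (G : RDFGraph) (φ : Shape) :
    ∀ (v s p o o' : Node), p ∉ φ.props → (s, p, o') ∈ G →
      (((s, p, o) : Triple) ∈ B C G φ v → ((s, p, o') : Triple) ∈ B C G φ v) ∧
      (((s, p, o) : Triple) ∈ Bneg C G φ v → ((s, p, o') : Triple) ∈ Bneg C G φ v) := by
  induction φ with
  | top => intro v s p o o' hp hG; constructor <;> intro h <;> simp [B, Bneg] at h
  | bot => intro v s p o o' hp hG; constructor <;> intro h <;> simp [B, Bneg] at h
  | test τ => intro v s p o o' hp hG; constructor <;> intro h <;> simp [B, Bneg] at h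
  | hasValue a => intro v s p o o' hp hG; constructor <;> intro h <;> simp [B, Bneg] at h
  | eq F q =>
    intro v s p o o' hp hG
    simp only [Shape.props, Set.mem_union, Set.mem_singleton_iff, not_or] at hp
    obtain ⟨hpF, hpq⟩ := hp
    cases F with
    | id =>
      constructor
      · intro h
        simp only [B, Set.mem_setOf_eq] at h
        exact absurd (congrArg (fun t : Triple => t.2.1) h.2) (by simpa using hpq)
      · intro h
        simp only [Bneg, Set.mem_setOf_eq] at h
        obtain ⟨_, x, hx, _⟩ := h
        exact absurd (congrArg (fun t : Triple => t.2.1) hx) (by simpa using hpq)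
    | expr E =>
      constructor
      · intro h
        simp only [B, Set.mem_setOf_eq] at h
        obtain ⟨_, x, hx⟩ := h
        have := graphOfPaths_prop_mem hx
        simp only [PathExpr.props] at this
        rcases this with h1 | h1
        · exact absurd h1 (by simpa [PathOrId.props] using hpF)
        · exact absurd h1 (by simpa using hpq)
      · intro h
        simp only [Bneg, Set.mem_setOf_eq] at h
        obtain ⟨_, h1 | h1⟩ := h
        · obtain ⟨x, _, hx⟩ := h1
          exact absurd (graphOfPaths_prop_mem hx) (by simpa [PathOrId.props] using hpF)
        · obtain ⟨x, hx, _⟩ := h1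
          exact absurd (congrArg (fun t : Triple => t.2.1) hx) (by simpa using hpq)
  | disj F q =>
    intro v s p o o' hp hG
    simp only [Shape.props, Set.mem_union, Set.mem_singleton_iff, not_or] at hp
    obtain ⟨hpF, hpq⟩ := hp
    constructor
    · intro h; cases F <;> simp [B] at h
    · intro h
      cases F with
      | id =>
        simp only [Bneg, Set.mem_setOf_eq] at h
        exact absurd (congrArg (fun t : Triple => t.2.1) h.2) (by simpa using hpq)
      | expr E =>
        simp only [Bneg, Set.mem_setOf_eq] at h
        obtain ⟨_, x, _, _, h1 | h1⟩ := h
        · exact absurd (graphOfPaths_prop_mem h1) (by simpa [PathOrId.props] using hpF)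
        · exact absurd (congrArg (fun t : Triple => t.2.1) h1) (by simpa using hpq)
  | closed P =>
    intro v s p o o' hp hG
    constructor
    · intro h; simp [B] at h
    · intro h
      simp only [Bneg, Set.mem_setOf_eq] at h ⊢
      obtain ⟨hnc, q, x, hx, _, _⟩ := h
      have h1 : s = v := congrArg Prod.fst hx
      subst h1
      refine ⟨hnc, p, o', rfl, hG, ?_⟩
      simpa [Shape.props] using hp
  | lessThan E q =>
    intro v s p o o' hp hG
    simp only [Shape.props, Set.mem_union, Set.mem_singleton_iff, not_or] at hp
    obtain ⟨hpE, hpq⟩ := hp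
    constructor
    · intro h; simp [B] at h
    · intro h
      simp only [Bneg, Set.mem_setOf_eq] at h
      obtain ⟨_, x, y, _, _, _, h1 | h1⟩ := h
      · exact absurd (graphOfPaths_prop_mem h1) hpE
      · exact absurd (congrArg (fun t : Triple => t.2.1) h1) (by simpa using hpq)
  | lessThanEq E q =>
    intro v s p o o' hp hG
    simp only [Shape.props, Set.mem_union, Set.mem_singleton_iff, not_or] at hp
    obtain ⟨hpE, hpq⟩ := hp
    constructor
    · intro h; simp [B] at h
    · intro h
      simp only [Bneg, Set.mem_setOf_eq] at h
      obtain ⟨_, x, y, _, _, _, h1 | h1⟩ := h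
      · exact absurd (graphOfPaths_prop_mem h1) hpE
      · exact absurd (congrArg (fun t : Triple => t.2.1) h1) (by simpa using hpq)
  | uniqueLang E =>
    intro v s p o o' hp hG
    constructor
    · intro h; simp [B] at h
    · intro h
      simp only [Bneg, Set.mem_setOf_eq] at h
      obtain ⟨_, y, x, _, _, _, _, h1⟩ := h
      exact absurd (graphOfPaths_prop_mem h1) (by simpa [Shape.props] using hp)
  | not ψ ih =>
    intro v s p o o' hp hG
    have := ih v s p o o' (by simpa [Shape.props] using hp) hG
    exact ⟨this.2, this.1⟩
  | and ψ₁ ψ₂ ih₁ ih₂ =>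
    intro v s p o o' hp hG
    simp only [Shape.props, Set.mem_union, not_or] at hp
    have h₁ := ih₁ v s p o o' hp.1 hG
    have h₂ := ih₂ v s p o o' hp.2 hG
    constructor
    · intro h
      simp only [B, Set.mem_setOf_eq] at h ⊢
      exact ⟨h.1, h.2.imp h₁.1 h₂.1⟩
    · intro h
      simp only [Bneg, Set.mem_setOf_eq] at h ⊢
      exact ⟨h.1, h.2.imp h₁.2 h₂.2⟩
  | or ψ₁ ψ₂ ih₁ ih₂ =>
    intro v s p o o' hp hG
    simp only [Shape.props, Set.mem_union, not_or] at hp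
    have h₁ := ih₁ v s p o o' hp.1 hG
    have h₂ := ih₂ v s p o o' hp.2 hG
    constructor
    · intro h
      simp only [B, Set.mem_setOf_eq] at h ⊢
      exact ⟨h.1, h.2.imp h₁.1 h₂.1⟩
    · intro h
      simp only [Bneg, Set.mem_setOf_eq] at h ⊢
      exact ⟨h.1, h.2.imp h₁.2 h₂.2⟩
  | geq n E ψ ih =>
    intro v s p o o' hp hG
    simp only [Shape.props, Set.mem_union, not_or] at hp
    constructor
    · intro h
      simp only [B, Set.mem_setOf_eq] at h ⊢
      obtain ⟨hc, x, hx, hcx, h1 | h1⟩ := h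
      · exact absurd (graphOfPaths_prop_mem h1) hp.1
      · exact ⟨hc, x, hx, hcx, Or.inr ((ih x s p o o' hp.2 hG).1 h1)⟩
    · intro h
      simp only [Bneg, Set.mem_setOf_eq] at h ⊢
      obtain ⟨hc, x, hx, hcx, h1 | h1⟩ := h
      · exact absurd (graphOfPaths_prop_mem h1) hp.1
      · exact ⟨hc, x, hx, hcx, Or.inr ((ih x s p o o' hp.2 hG).2 h1)⟩
  | leq n E ψ ih =>
    intro v s p o o' hp hG
    simp only [Shape.props, Set.mem_union, not_or] at hp
    constructor
    · intro h
      simp only [B, Set.mem_setOf_eq] at h ⊢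
      obtain ⟨hc, x, hx, hcx, h1 | h1⟩ := h
      · exact absurd (graphOfPaths_prop_mem h1) hp.1
      · exact ⟨hc, x, hx, hcx, Or.inr ((ih x s p o o' hp.2 hG).2 h1)⟩
    · intro h
      simp only [Bneg, Set.mem_setOf_eq] at h ⊢
      obtain ⟨hc, x, hx, hcx, h1 | h1⟩ := h
      · exact absurd (graphOfPaths_prop_mem h1) hp.1
      · exact ⟨hc, x, hx, hcx, Or.inr ((ih x s p o o' hp.2 hG).1 h1)⟩
  | all E ψ ih =>
    intro v s p o o' hp hG
    simp only [Shape.props, Set.mem_union, not_or] at hp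
    constructor
    · intro h
      simp only [B, Set.mem_setOf_eq] at h ⊢
      obtain ⟨hc, x, hx, h1 | h1⟩ := h
      · exact absurd (graphOfPaths_prop_mem h1) hp.1
      · exact ⟨hc, x, hx, Or.inr ((ih x s p o o' hp.2 hG).1 h1)⟩
    · intro h
      simp only [Bneg, Set.mem_setOf_eq] at h ⊢
      obtain ⟨hc, x, hx, hcx, h1 | h1⟩ := h
      · exact absurd (graphOfPaths_prop_mem h1) hp.1
      · exact ⟨hc, x, hx, hcx, Or.inr ((ih x s p o o' hp.2 hG).2 h1)⟩

lemma pathExpr_props_finite (E : PathExpr) : E.props.Finite := by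
  induction E with
  | prop p => exact Set.finite_singleton _
  | inv E ih => exact ih
  | comp E₁ E₂ ih₁ ih₂ => exact ih₁.union ih₂
  | union E₁ E₂ ih₁ ih₂ => exact ih₁.union ih₂
  | star E ih => exact ih
  | opt E ih => exact ih

lemma pathOrId_props_finite (F : PathOrId) : F.props.Finite := by
  cases F with
  | id => exact Set.finite_empty
  | expr E => exact pathExpr_props_finite E

lemma shape_props_finite (φ : Shape) : φ.props.Finite := by
  induction φ with
  | top => exact Set.finite_empty
  | bot => exact Set.finite_empty
  | test _ => exact Set.finite_empty
  | hasValue _ => exact Set.finite_empty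
  | eq F p => exact (pathOrId_props_finite F).union (Set.finite_singleton _)
  | disj F p => exact (pathOrId_props_finite F).union (Set.finite_singleton _)
  | closed P => exact P.finite_toSet
  | lessThan E p => exact (pathExpr_props_finite E).union (Set.finite_singleton _)
  | lessThanEq E p => exact (pathExpr_props_finite E).union (Set.finite_singleton _)
  | uniqueLang E => exact pathExpr_props_finite E
  | not ψ ih => exact ih
  | and ψ₁ ψ₂ ih₁ ih₂ => exact ih₁.union ih₂
  | or ψ₁ ψ₂ ih₁ ih₂ => exact ih₁.union ih₂
  | geq n E ψ ih => exact (pathExpr_props_finite E).union ih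
  | leq n E ψ ih => exact (pathExpr_props_finite E).union ih
  | all E ψ ih => exact (pathExpr_props_finite E).union ih

/-- no shape expresses the TPF (?x,?y,c) as a shape fragment. -/
theorem tpf_object_inexpressible (c : Node) (C : Ctx) (φ : Shape) :
    ∃ G : RDFGraph, Frag C G {φ} ≠ {t ∈ G | t.2.2 = c} := by
  obtain ⟨b, hb⟩ := (shape_props_finite φ).infinite_compl.nonempty
  set d := c + 1 with hd
  have hdc : d ≠ c := Nat.succ_ne_self c
  set G : RDFGraph := {(0, b, c), (0, b, d)} with hG
  refine ⟨G, fun hEq => ?_⟩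
  have hc_mem : ((0, b, c) : Triple) ∈ Frag C G {φ} := by
    rw [hEq]
    exact ⟨Or.inl rfl, rfl⟩
  obtain ⟨v, ψ, hψ, hB⟩ := hc_mem
  rw [Set.mem_singleton_iff] at hψ; rw [hψ] at hB
  have hdG : ((0, b, d) : Triple) ∈ G := Or.inr rfl
  have hd_mem : ((0, b, d) : Triple) ∈ B C G φ v :=
    (key C G φ v 0 b c d hb hdG).1 hB
  have : ((0, b, d) : Triple) ∈ {t ∈ G | t.2.2 = c} := by
    rw [← hEq]; exact ⟨v, φ, rfl, hd_mem⟩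
  exact hdc this.2
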